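/- The function $\zeta(u) = e^u \operatorname{erfc}(\sqrt{u})$ satisfies $\zeta(u) = \int_0^\infty y e^{-uy} \frac{1}{\pi y^{3/2}(y+1)}\, dy$ for all $u > 0$; in particular $\zeta$ is completely monotone. -/

import Mathlib

open Set Real

/-- The complementary error function. -/
noncomputable def erfc (x : ℝ) : ℝ := (2 / Real.sqrt π) * ∫ t in Ioi x, Real.exp (-t ^ 2)

/-- `ζ(u) = e^u erfc(√u)`. -/
noncomputable def zeta (u : ℝ) : ℝ := Real.exp u * erfc (Real.sqrt u)

section Aux

open MeasureTheory Filter Topology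

/-- The density `w(y) = y^(-1/2) / (π (1+y))`. -/
noncomputable def ww (y : ℝ) : ℝ := y ^ (-(1/2) : ℝ) / (π * (1 + y))

lemma ww_nonneg {y : ℝ} (hy : 0 ≤ y) : 0 ≤ ww y := by
  unfold ww
  have h1 : (0:ℝ) ≤ y ^ (-(1/2) : ℝ) := Real.rpow_nonneg hy _
  have h2 : (0:ℝ) < π * (1 + y) := by positivity
  positivity

lemma ww_contOn : ContinuousOn ww (Ioi (0:ℝ)) := by
  apply ContinuousOn.div
  · exact continuousOn_id.rpow_const fun y hy => Or.inl (ne_of_gt hy)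
  · fun_prop
  · intro y hy
    have : (0:ℝ) < 1 + y := by simp at hy; linarith
    positivity

/-- `gg n u = ∫_0^∞ y^n e^{-uy} w(y) dy`. -/
noncomputable def gg (n : ℕ) (u : ℝ) : ℝ := ∫ y in Ioi (0:ℝ), y ^ n * Real.exp (-u * y) * ww y

lemma contOn_integrand (n : ℕ) (c : ℝ) :
    ContinuousOn (fun y : ℝ => y ^ n * Real.exp (-c * y) * ww y) (Ioi 0) :=
  (((continuousOn_id.pow n).mul (Real.continuous_exp.comp
    (continuous_const.mul continuous_id)).continuousOn).mul ww_contOn)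

lemma meas_integrand (n : ℕ) (c : ℝ) :
    AEStronglyMeasurable (fun y : ℝ => y ^ n * Real.exp (-c * y) * ww y)
      (volume.restrict (Ioi 0)) :=
  (contOn_integrand n c).aestronglyMeasurable measurableSet_Ioi

lemma intg_rpow_exp {s c : ℝ} (hs : -1 < s) (hc : 0 < c) :
    IntegrableOn (fun y : ℝ => y ^ s * Real.exp (-c * y)) (Ioi 0) := by
  have := integrableOn_rpow_mul_exp_neg_mul_rpow hs (by norm_num : (0:ℝ) < 1) hc
  simpa [Real.rpow_one] using this

lemma intg_integrand (n : ℕ) {c : ℝ} (hc : 0 < c) :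
    IntegrableOn (fun y : ℝ => y ^ n * Real.exp (-c * y) * ww y) (Ioi 0) := by
  apply Integrable.mono'
    ((intg_rpow_exp (s := (n:ℝ) - 1/2) (by have := Nat.cast_nonneg (α:=ℝ) n; linarith) hc).mul_const (1/π))
    (meas_integrand n c)
  filter_upwards [ae_restrict_mem measurableSet_Ioi] with y (hy : 0 < y)
  have hwn : 0 ≤ ww y := ww_nonneg hy.le
  rw [Real.norm_eq_abs, abs_of_nonneg (by positivity)]
  have hb : ww y ≤ y ^ (-(1/2):ℝ) * (1/π) := by
    unfold ww
    rw [mul_one_div]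
    exact div_le_div_of_nonneg_left (Real.rpow_nonneg hy.le _) Real.pi_pos
      (by nlinarith [Real.pi_pos])
  calc y ^ n * Real.exp (-c * y) * ww y
      ≤ y ^ n * Real.exp (-c * y) * (y ^ (-(1/2):ℝ) * (1/π)) := by
        have : (0:ℝ) ≤ y ^ n * Real.exp (-c*y) := by positivity
        exact mul_le_mul_of_nonneg_left hb this
    _ = y ^ ((n:ℝ) - 1/2) * Real.exp (-c * y) * (1/π) := by
        rw [show (n:ℝ) - 1/2 = (n:ℝ) + (-(1/2)) by ring, Real.rpow_add hy, Real.rpow_natCast]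
        ring

lemma gg_hasDeriv (n : ℕ) {u : ℝ} (hu : 0 < u) :
    HasDerivAt (gg n) (-(gg (n+1) u)) u := by
  have key := hasDerivAt_integral_of_dominated_loc_of_deriv_le (μ := volume.restrict (Ioi 0))
    (F := fun x y => y ^ n * Real.exp (-x * y) * ww y)
    (F' := fun x y => -(y ^ (n+1) * Real.exp (-x * y) * ww y))
    (x₀ := u) (s := Metric.ball u (u/2))
    (bound := fun y => y ^ (n+1) * Real.exp (-(u/2) * y) * ww y)
    (Metric.ball_mem_nhds u (by linarith))
    (Eventually.of_forall fun x => meas_integrand n x)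
    (intg_integrand n hu)
    ((meas_integrand (n+1) u).neg)
    ?_ (intg_integrand (n+1) (c := u/2) (by linarith))
    ?_
  · have : (∫ y in Ioi (0:ℝ), -(y ^ (n+1) * Real.exp (-u * y) * ww y)) = -(gg (n+1) u) := by
      rw [integral_neg]; rfl
    exact this ▸ key.2
  · filter_upwards [ae_restrict_mem measurableSet_Ioi] with y (hy : 0 < y)
    intro x hx
    have h := mem_ball_iff_norm.1 hx
    rw [Real.norm_eq_abs, abs_lt] at h
    have hx2 : u/2 ≤ x := by linarith [h.1]
    have hwn : 0 ≤ ww y := ww_nonneg hy.le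
    rw [norm_neg, Real.norm_eq_abs, abs_of_nonneg (by positivity)]
    gcongr
  · filter_upwards [ae_restrict_mem measurableSet_Ioi] with y (hy : 0 < y)
    intro x hx
    have h1 : HasDerivAt (fun x : ℝ => -x * y) (-y) x := by
      simpa using ((hasDerivAt_id x).neg.mul_const y)
    have h2 : HasDerivAt (fun x : ℝ => Real.exp (-x * y)) (Real.exp (-x*y) * (-y)) x := h1.exp
    have h3 := (h2.const_mul (y ^ n)).mul_const (ww y)
    have h3' : HasDerivAt (fun x : ℝ => y ^ n * Real.exp (-x * y) * ww y) _ x := h3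
    exact h3'.congr_deriv (by ring)

lemma integral_half_exp {u : ℝ} (hu : 0 < u) :
    ∫ y in Ioi (0:ℝ), y ^ (-(1/2):ℝ) * Real.exp (-u * y) = Real.sqrt π / Real.sqrt u := by
  have h := Real.integral_rpow_mul_exp_neg_mul_Ioi (a := 1/2) (r := u) one_half_pos hu
  rw [show (1/2 : ℝ) - 1 = -(1/2) by norm_num] at h
  simp_rw [neg_mul] at h ⊢
  rw [h, Real.Gamma_one_half_eq, ← Real.sqrt_eq_rpow, one_div, Real.sqrt_inv]
  rw [inv_mul_eq_div]

lemma gg_one_eq {u : ℝ} (hu : 0 < u) :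
    gg 1 u = (Real.sqrt π * Real.sqrt u)⁻¹ - gg 0 u := by
  have hptw : ∀ y ∈ Ioi (0:ℝ), y ^ (1:ℕ) * Real.exp (-u * y) * ww y
      = y ^ (-(1/2):ℝ) * Real.exp (-u * y) * (1/π) - y ^ (0:ℕ) * Real.exp (-u * y) * ww y := by
    intro y hy
    have hy' : (0:ℝ) < y := hy
    have h1y : (0:ℝ) < 1 + y := by linarith
    unfold ww
    rw [pow_one, pow_zero, one_mul]
    field_simp
    ring
  rw [show gg 1 u = ∫ y in Ioi (0:ℝ), (y ^ (-(1/2):ℝ) * Real.exp (-u * y) * (1/π)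
      - y ^ (0:ℕ) * Real.exp (-u * y) * ww y) from
    setIntegral_congr_fun measurableSet_Ioi hptw]
  rw [integral_sub ((intg_rpow_exp (by norm_num) hu).mul_const (1/π)) (intg_integrand 0 hu)]
  have : (∫ y in Ioi (0:ℝ), y ^ (-(1/2):ℝ) * Real.exp (-u * y) * (1/π))
      = (Real.sqrt π / Real.sqrt u) * (1/π) := by
    rw [integral_mul_const, integral_half_exp hu]
  rw [this]
  have hπ : Real.sqrt π * Real.sqrt π = π := Real.mul_self_sqrt Real.pi_pos.le
  have hπ0 : Real.sqrt π ≠ 0 := by positivity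
  have hu0 : Real.sqrt u ≠ 0 := by positivity
  congr 1
  field_simp
  linear_combination hπ

lemma gg_zero_hasDeriv {u : ℝ} (hu : 0 < u) :
    HasDerivAt (gg 0) (gg 0 u - (Real.sqrt π * Real.sqrt u)⁻¹) u := by
  have h := gg_hasDeriv 0 hu
  rw [show (0+1 : ℕ) = 1 from rfl, gg_one_eq hu] at h
  simpa [neg_sub] using h

lemma gg_nonneg (n : ℕ) (u : ℝ) : 0 ≤ gg n u := by
  apply setIntegral_nonneg measurableSet_Ioi
  intro y hy
  have hy' : (0:ℝ) < y := hy
  have := ww_nonneg hy'.le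
  positivity

lemma gg_mono {u v : ℝ} (hu : 0 < u) (huv : u ≤ v) : gg 0 v ≤ gg 0 u := by
  apply setIntegral_mono_on (intg_integrand 0 (lt_of_lt_of_le hu huv)) (intg_integrand 0 hu)
    measurableSet_Ioi
  intro y hy
  have hy' : (0:ℝ) < y := hy
  have := ww_nonneg hy'.le
  gcongr

end Aux

section Aux2

open MeasureTheory Filter Topology

lemma cont_gauss : Continuous (fun t : ℝ => Real.exp (-t ^ 2)) := by fun_prop

lemma intg_gauss : Integrable (fun t : ℝ => Real.exp (-t ^ 2)) := by
  have := integrable_exp_neg_mul_sq (b := 1) one_pos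
  simpa using this

noncomputable def G (x : ℝ) : ℝ := ∫ t in Ioi x, Real.exp (-t ^ 2)

lemma G_split_le {a x : ℝ} (h : a ≤ x) :
    G a = (∫ t in a..x, Real.exp (-t ^ 2)) + G x := by
  unfold G
  rw [intervalIntegral.integral_of_le h,
    ← setIntegral_union (Ioc_disjoint_Ioi le_rfl) measurableSet_Ioi
      intg_gauss.integrableOn intg_gauss.integrableOn,
    Ioc_union_Ioi_eq_Ioi h]

lemma G_split (a x : ℝ) :
    G a = (∫ t in a..x, Real.exp (-t ^ 2)) + G x := by
  rcases le_total a x with h | h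
  · exact G_split_le h
  · have := G_split_le h
    rw [intervalIntegral.integral_symm]
    linarith [this]

lemma G_hasDeriv (x : ℝ) : HasDerivAt G (-(Real.exp (-x ^ 2))) x := by
  have hfun : G = fun x => G 0 - ∫ t in (0:ℝ)..x, Real.exp (-t ^ 2) := by
    funext x
    have := G_split 0 x
    linarith
  rw [hfun]
  have hftc : HasDerivAt (fun x => ∫ t in (0:ℝ)..x, Real.exp (-t ^ 2))
      (Real.exp (-x ^ 2)) x :=
    intervalIntegral.integral_hasDerivAt_right (cont_gauss.intervalIntegrable 0 x)
      (cont_gauss.stronglyMeasurableAtFilter _ _) cont_gauss.continuousAt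
  have h' : HasDerivAt (fun x => G 0 - ∫ t in (0:ℝ)..x, Real.exp (-t ^ 2)) _ x :=
    (hasDerivAt_const x (G 0)).sub hftc
  simpa using h'

lemma erfc_hasDeriv (x : ℝ) :
    HasDerivAt erfc (-((2 / Real.sqrt π) * Real.exp (-x ^ 2))) x := by
  have : erfc = fun x => (2 / Real.sqrt π) * G x := rfl
  rw [this]
  simpa [mul_neg] using (G_hasDeriv x).const_mul (2 / Real.sqrt π)

noncomputable def hh (v : ℝ) : ℝ := Real.exp (-v) * gg 0 v - erfc (Real.sqrt v)

lemma hh_hasDeriv {v : ℝ} (hv : 0 < v) : HasDerivAt hh 0 v := by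
  have hsq : HasDerivAt Real.sqrt (1 / (2 * Real.sqrt v)) v :=
    Real.hasDerivAt_sqrt (ne_of_gt hv)
  have herfc := (erfc_hasDeriv (Real.sqrt v)).comp v hsq
  have hexp : HasDerivAt (fun v : ℝ => Real.exp (-v)) (-Real.exp (-v)) v := by
    simpa using ((hasDerivAt_id v).neg).exp
  have h1 := hexp.mul (gg_zero_hasDeriv hv)
  have h := h1.sub herfc
  have h' : HasDerivAt hh _ v := h
  convert h' using 1
  have hsu : Real.sqrt v ^ 2 = v := Real.sq_sqrt hv.le
  have hπ0 : (0:ℝ) < Real.sqrt π := Real.sqrt_pos.2 Real.pi_pos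
  have hv0 : (0:ℝ) < Real.sqrt v := Real.sqrt_pos.2 hv
  rw [hsu]
  field_simp
  ring

lemma hh_const {u v : ℝ} (hu : 0 < u) (huv : u ≤ v) : hh v = hh u := by
  have := constant_of_has_deriv_right_zero (f := hh) (a := u) (b := v)
    (fun x hx => ((hh_hasDeriv (lt_of_lt_of_le hu hx.1)).continuousAt).continuousWithinAt)
    (fun x hx => ((hh_hasDeriv (lt_of_lt_of_le hu hx.1)).hasDerivWithinAt))
  exact this v ⟨huv, le_refl v⟩

lemma G_tendsto : Tendsto G atTop (𝓝 0) := by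
  have h := intervalIntegral_tendsto_integral_Ioi (μ := volume) 0
    (intg_gauss.integrableOn) (tendsto_id (α := ℝ))
  have : Tendsto (fun x : ℝ => G 0 - ∫ t in (0:ℝ)..x, Real.exp (-t ^ 2)) atTop
      (𝓝 (G 0 - ∫ t in Ioi (0:ℝ), Real.exp (-t ^ 2))) := tendsto_const_nhds.sub h
  rw [show G 0 - ∫ t in Ioi (0:ℝ), Real.exp (-t ^ 2) = 0 by rw [sub_eq_zero]; rfl] at this
  refine this.congr fun x => ?_
  have := G_split 0 x
  linarith

lemma erfc_sqrt_tendsto : Tendsto (fun v => erfc (Real.sqrt v)) atTop (𝓝 0) := by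
  have hsr : Tendsto Real.sqrt atTop atTop :=
    (tendsto_rpow_atTop (by norm_num : (0:ℝ) < 1/2)).congr fun x => (Real.sqrt_eq_rpow x).symm
  have : Tendsto (fun x => (2 / Real.sqrt π) * G x) atTop (𝓝 ((2 / Real.sqrt π) * 0)) :=
    G_tendsto.const_mul _
  rw [mul_zero] at this
  exact this.comp hsr

lemma exp_gg_tendsto : Tendsto (fun v => Real.exp (-v) * gg 0 v) atTop (𝓝 0) := by
  apply squeeze_zero' (g := fun v => Real.exp (-v) * gg 0 1)
  · filter_upwards [eventually_ge_atTop (1:ℝ)] with v hv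
    have := gg_nonneg 0 v
    positivity
  · filter_upwards [eventually_ge_atTop (1:ℝ)] with v hv
    exact mul_le_mul_of_nonneg_left (gg_mono one_pos hv) (Real.exp_nonneg _)
  · simpa using (Real.tendsto_exp_neg_atTop_nhds_zero).mul_const (gg 0 1)

lemma hh_zero {u : ℝ} (hu : 0 < u) : hh u = 0 := by
  have htend : Tendsto hh atTop (𝓝 0) := by
    have := exp_gg_tendsto.sub erfc_sqrt_tendsto
    rw [sub_zero] at this
    exact this
  have hconst : ∀ᶠ v in atTop, hh v = hh u :=
    (eventually_ge_atTop u).mono fun v hv => hh_const hu hv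
  have : Tendsto hh atTop (𝓝 (hh u)) := by
    rw [Filter.tendsto_congr' hconst]
    exact tendsto_const_nhds
  exact (tendsto_nhds_unique this htend)

lemma zeta_eq_gg {u : ℝ} (hu : 0 < u) : zeta u = gg 0 u := by
  have h := hh_zero hu
  unfold hh at h
  unfold zeta
  have : erfc (Real.sqrt u) = Real.exp (-u) * gg 0 u := by linarith
  rw [this, ← mul_assoc, ← Real.exp_add]
  simp

lemma iteratedDeriv_zeta_eq {n : ℕ} {u : ℝ} (hu : 0 < u) :
    iteratedDeriv n zeta u = (-1:ℝ)^n * gg n u := by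
  induction n generalizing u with
  | zero => simpa using zeta_eq_gg hu
  | succ n ih =>
    rw [iteratedDeriv_succ]
    have hev : (iteratedDeriv n zeta) =ᶠ[𝓝 u] fun v => (-1:ℝ)^n * gg n v := by
      filter_upwards [Ioi_mem_nhds hu] with v hv
      exact ih hv
    rw [hev.deriv_eq]
    have hder := (gg_hasDeriv n hu).const_mul ((-1:ℝ)^n)
    rw [hder.deriv]
    ring

end Aux2

theorem stmt8 :
    (∀ u : ℝ, 0 < u →
      zeta u = ∫ y in Ioi (0:ℝ), y * Real.exp (-u * y) * (1 / (π * y ^ (3/2 : ℝ) * (y + 1)))) ∧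
    (∀ n : ℕ, ∀ u : ℝ, 0 < u → 0 ≤ (-1 : ℝ) ^ n * iteratedDeriv n zeta u) := by
  constructor
  · intro u hu
    rw [zeta_eq_gg hu]
    apply MeasureTheory.setIntegral_congr_fun measurableSet_Ioi
    intro y hy
    have hy' : (0:ℝ) < y := hy
    have h1y : (0:ℝ) < 1 + y := by linarith
    have h32 : y ^ (3/2:ℝ) = y * y ^ (1/2:ℝ) := by
      rw [show (3/2:ℝ) = 1 + 1/2 by norm_num, Real.rpow_add hy', Real.rpow_one]
    have hneg : y ^ (-(1/2):ℝ) = (y ^ (1/2:ℝ))⁻¹ := by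
      rw [← Real.rpow_neg hy'.le]
    have hhalf : (0:ℝ) < y ^ (1/2:ℝ) := Real.rpow_pos_of_pos hy' _
    show y ^ (0:ℕ) * Real.exp (-u * y) * ww y
      = y * Real.exp (-u * y) * (1 / (π * y ^ (3/2:ℝ) * (y + 1)))
    unfold ww
    rw [pow_zero, one_mul, h32, hneg]
    have hπ : (0:ℝ) < π := Real.pi_pos
    field_simp
    ring
  · intro n u hu
    rw [iteratedDeriv_zeta_eq hu, ← mul_assoc, ← mul_pow]
    simpa using gg_nonneg n u
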